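/- (Lemma 6) Fix i ∈ {0, …, n−1}, b ∈ {1, …, d−k+h}, and a helper set R ⊆ {0, …, n−1} \ {i} with |R| = d. If two codewords c, c' ∈ C satisfy c_{u,b,a} = c'_{u,b,a} for all u ∈ R and all a ∈ V_i, then (1) c_{j,b,a} = c'_{j,b,a} for all j ∈ {0, …, n−1} and all a ∈ V_i, and (2) c_{i,b,a} = c'_{i,b,a} for all a ∈ {0, …, s−1}^n. -/

import Mathlib

open Finset

/-- The code `C` of Construction 1: arrays `c = (c_{i,b,a})` with `i ∈ [0,n)`,
`b ∈ {1,…,B}` (here `B = d-k+h`; entries of `c` with `b` outside this range are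
irrelevant), and `a ∈ {0,…,s-1}^n`, satisfying the parity-check equations
`∑_i λ_i^t c_{i,b,a} + ∑_i δ(a_i) ∑_{e=1}^{s-1} μ_e^t c_{i,b,a(i,e)} = 0`
for all `t ∈ [0,r)`, all `b ∈ {1,…,B}`, and all `a`. -/
def codeC {F : Type*} [Field F] (n r s B : ℕ) (lam : Fin n → F) (mu : Fin s → F)
    (c : Fin n → ℕ → (Fin n → Fin s) → F) : Prop :=
  ∀ t < r, ∀ b : ℕ, 1 ≤ b → b ≤ B → ∀ a : Fin n → Fin s,
    ∑ i, lam i ^ t * c i b a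
      + ∑ i, (if (a i : ℕ) = 0 then
          ∑ e ∈ univ.filter (fun e : Fin s => (e : ℕ) ≠ 0),
            mu e ^ t * c i b (Function.update a i e)
        else 0) = 0

/-- Lemma 6: if two codewords of `C` agree on the layer-`b` symbols `c_{u,b,a}`
for all helper nodes `u ∈ R` (`|R| = d`, `i ∉ R`) and all `a ∈ V_i`, then
(1) they agree on `c_{j,b,a}` for every node `j` and every `a ∈ V_i`, and
(2) they agree on all of node `i`'s layer-`b` symbols `c_{i,b,a}`,
`a ∈ {0,…,s-1}^n`. -/

lemma vand_zero {F : Type*} [Field F] {ι : Type*} [DecidableEq ι] (S : Finset ι)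
    (α v : ι → F) (hα : Set.InjOn α S)
    (h : ∀ t < S.card, ∑ x ∈ S, α x ^ t * v x = 0) :
    ∀ x ∈ S, v x = 0 := by
  intro x0 hx0
  have hcard : 0 < S.card := card_pos.2 ⟨x0, hx0⟩
  have key : ∀ p : Polynomial F, p.natDegree < S.card →
      ∑ x ∈ S, p.eval (α x) * v x = 0 := by
    intro p hp
    have e1 : ∑ x ∈ S, p.eval (α x) * v x
        = ∑ t ∈ Finset.range S.card, p.coeff t * ∑ x ∈ S, α x ^ t * v x := by
      calc ∑ x ∈ S, p.eval (α x) * v x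
          = ∑ x ∈ S, ∑ t ∈ Finset.range S.card, p.coeff t * (α x ^ t * v x) := by
            refine sum_congr rfl fun x _ => ?_
            rw [Polynomial.eval_eq_sum_range' hp, Finset.sum_mul]
            simp [mul_assoc]
        _ = ∑ t ∈ Finset.range S.card, ∑ x ∈ S, p.coeff t * (α x ^ t * v x) :=
            Finset.sum_comm
        _ = _ := by simp [Finset.mul_sum]
    rw [e1]
    refine Finset.sum_eq_zero fun t ht => ?_
    rw [h t (mem_range.1 ht), mul_zero]
  have hb := key (Lagrange.basis S α x0)
    (by rw [Lagrange.natDegree_basis hα hx0]; omega)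
  rw [Finset.sum_eq_single x0
      (fun x hx hne => by rw [Lagrange.eval_basis_of_ne (Ne.symm hne) hx, zero_mul])
      (fun hne => absurd hx0 hne),
    Lagrange.eval_basis_self hα hx0, one_mul] at hb
  exact hb

theorem single_layer_repair
    {F : Type*} [Field F] [Fintype F]
    (n k d h r s N : ℕ) (hk0 : 0 < k) (hr0 : 0 < r) (hh : 1 ≤ h)
    (hnk : n = k + r) (hkd : k < d) (hdn : d + h ≤ n)
    (hs : s = d - k + 1) (hN : N = (d - k + h) * s ^ n)
    (lam : Fin n → F) (mu : Fin s → F)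
    (hlam : Function.Injective lam)
    (hmu : ∀ e e' : Fin s, (e : ℕ) ≠ 0 → (e' : ℕ) ≠ 0 → mu e = mu e' → e = e')
    (hlammu : ∀ (i : Fin n) (e : Fin s), (e : ℕ) ≠ 0 → lam i ≠ mu e)
    (c c' : Fin n → ℕ → (Fin n → Fin s) → F)
    (hc : codeC n r s (d - k + h) lam mu c) (hc' : codeC n r s (d - k + h) lam mu c')
    (i : Fin n) (b : ℕ) (hb : 1 ≤ b) (hb' : b ≤ d - k + h)
    (R : Finset (Fin n)) (hiR : i ∉ R) (hR : R.card = d)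
    (hdownload : ∀ u ∈ R, ∀ a : Fin n → Fin s, (a i : ℕ) = 0 →
      c u b a = c' u b a) :
    (∀ j : Fin n, ∀ a : Fin n → Fin s, (a i : ℕ) = 0 → c j b a = c' j b a)
      ∧ (∀ a : Fin n → Fin s, c i b a = c' i b a) := by
  have hs0 : 0 < s := by omega
  -- the difference codeword
  set f : Fin n → (Fin n → Fin s) → F := fun j a => c j b a - c' j b a with hf
  have heq : ∀ t < r, ∀ a : Fin n → Fin s,
      ∑ j, lam j ^ t * f j a
        + ∑ j, (if (a j : ℕ) = 0 then
            ∑ e ∈ univ.filter (fun e : Fin s => (e : ℕ) ≠ 0),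
              mu e ^ t * f j (Function.update a j e)
          else 0) = 0 := by
    intro t ht a
    have h1 := hc t ht b hb hb' a
    have h2 := hc' t ht b hb hb' a
    have e1 : ∑ j, lam j ^ t * f j a
        = (∑ j, lam j ^ t * c j b a) - ∑ j, lam j ^ t * c' j b a := by
      rw [← Finset.sum_sub_distrib]
      exact Finset.sum_congr rfl fun j _ => by simp [hf, mul_sub]
    have e2 : (∑ j, (if (a j : ℕ) = 0 then
            ∑ e ∈ univ.filter (fun e : Fin s => (e : ℕ) ≠ 0),
              mu e ^ t * f j (Function.update a j e) else 0))
        = (∑ j, (if (a j : ℕ) = 0 then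
            ∑ e ∈ univ.filter (fun e : Fin s => (e : ℕ) ≠ 0),
              mu e ^ t * c j b (Function.update a j e) else 0))
          - ∑ j, (if (a j : ℕ) = 0 then
            ∑ e ∈ univ.filter (fun e : Fin s => (e : ℕ) ≠ 0),
              mu e ^ t * c' j b (Function.update a j e) else 0) := by
      rw [← Finset.sum_sub_distrib]
      refine Finset.sum_congr rfl fun j _ => ?_
      split
      · rw [← Finset.sum_sub_distrib]
        exact Finset.sum_congr rfl fun e _ => by simp [hf, mul_sub]
      · simp
    rw [e1, e2]
    linear_combination h1 - h2
  -- cardinality facts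
  have hRuniv : R ⊆ univ := subset_univ R
  have hcompl : (univ \ R).card = n - d := by
    rw [card_sdiff_of_subset hRuniv, card_univ, Fintype.card_fin, hR]
  have hfilter : (univ.filter (fun e : Fin s => (e : ℕ) ≠ 0)).card = s - 1 := by
    have : (univ.filter (fun e : Fin s => (e : ℕ) ≠ 0))
        = univ \ {(⟨0, hs0⟩ : Fin s)} := by
      ext e; simp [Fin.ext_iff]
    rw [this, card_sdiff_of_subset (by simp), card_univ, Fintype.card_fin, card_singleton]
  -- main induction
  have key : ∀ m : ℕ, ∀ a : Fin n → Fin s, (a i : ℕ) = 0 →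
      (univ.filter (fun j => j ∉ R ∧ j ≠ i ∧ (a j : ℕ) = 0)).card = m →
      (∀ j, j ∉ R → f j a = 0) ∧
      (∀ e : Fin s, (e : ℕ) ≠ 0 → f i (Function.update a i e) = 0) := by
    intro m
    induction m using Nat.strong_induction_on with
    | _ m IH =>
    intro a hai hZ
    -- all coupling terms vanish
    have hcouple : ∀ j : Fin n, j ≠ i → (a j : ℕ) = 0 →
        ∀ e : Fin s, (e : ℕ) ≠ 0 → f j (Function.update a j e) = 0 := by
      intro j hji haj e he
      have hine : (Function.update a j e) i = a i := Function.update_of_ne (Ne.symm hji) _ _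
      by_cases hjR : j ∈ R
      · simp only [hf]
        rw [hdownload j hjR _ (by rw [hine]; exact hai), sub_self]
      · -- use induction hypothesis: one fewer zero coordinate
        have hjmem : j ∈ univ.filter (fun j' => j' ∉ R ∧ j' ≠ i ∧ (a j' : ℕ) = 0) := by
          simp [hjR, hji, haj]
        have hset : univ.filter (fun j' => j' ∉ R ∧ j' ≠ i ∧
              ((Function.update a j e) j' : ℕ) = 0)
            = (univ.filter (fun j' => j' ∉ R ∧ j' ≠ i ∧ (a j' : ℕ) = 0)).erase j := by
          ext j'
          by_cases hj' : j' = j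
          · subst hj'; simp [he]
          · simp [Function.update_of_ne hj', hj']
        have hm : m - 1 < m := by
          have : 0 < m := hZ ▸ card_pos.2 ⟨j, hjmem⟩
          omega
        have hcard : (univ.filter (fun j' => j' ∉ R ∧ j' ≠ i ∧
            ((Function.update a j e) j' : ℕ) = 0)).card = m - 1 := by
          rw [hset, card_erase_of_mem hjmem, hZ]
        exact (IH (m - 1) hm _ (by rw [hine]; exact hai) hcard).1 j hjR
    -- the Vandermonde system
    set S : Finset (Fin n ⊕ Fin s) :=
      (univ \ R).disjSum (univ.filter (fun e : Fin s => (e : ℕ) ≠ 0)) with hS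
    set α : Fin n ⊕ Fin s → F := Sum.elim lam mu with hα
    set v : Fin n ⊕ Fin s → F :=
      Sum.elim (fun j => f j a) (fun e => f i (Function.update a i e)) with hv
    have hScard : S.card = r := by
      rw [hS, card_disjSum, hcompl, hfilter]; omega
    have hinj : Set.InjOn α S := by
      intro x hx y hy hxy
      rcases x with x | x <;> rcases y with y | y
      · exact congrArg Sum.inl (hlam hxy)
      · exfalso
        rw [hS, mem_coe, Finset.mem_disjSum] at hy
        rcases hy with ⟨_, _, h'⟩ | ⟨e', he', h'⟩
        · exact absurd h' Sum.inl_ne_inr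
        · have hey : e' = y := Sum.inr.inj h'
          subst hey
          exact hlammu x e' (by simpa using (mem_filter.1 he').2) hxy
      · exfalso
        rw [hS, mem_coe, Finset.mem_disjSum] at hx
        rcases hx with ⟨_, _, h'⟩ | ⟨e', he', h'⟩
        · exact absurd h' Sum.inl_ne_inr
        · have hex : e' = x := Sum.inr.inj h'
          subst hex
          exact hlammu y e' (by simpa using (mem_filter.1 he').2) hxy.symm
      · refine congrArg Sum.inr (hmu x y ?_ ?_ hxy)
        · rw [hS, mem_coe, Finset.mem_disjSum] at hx
          rcases hx with ⟨_, _, h'⟩ | ⟨e', he', h'⟩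
          · exact absurd h' Sum.inl_ne_inr
          · have hex : e' = x := Sum.inr.inj h'
            subst hex
            simpa using (mem_filter.1 he').2
        · rw [hS, mem_coe, Finset.mem_disjSum] at hy
          rcases hy with ⟨_, _, h'⟩ | ⟨e', he', h'⟩
          · exact absurd h' Sum.inl_ne_inr
          · have hey : e' = y := Sum.inr.inj h'
            subst hey
            simpa using (mem_filter.1 he').2
    have hsys : ∀ t < S.card, ∑ x ∈ S, α x ^ t * v x = 0 := by
      intro t ht
      rw [hScard] at ht
      have h0 := heq t ht a
      -- first sum: restrict to univ \ R
      have e1 : ∑ j, lam j ^ t * f j a = ∑ j ∈ univ \ R, lam j ^ t * f j a := by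
        rw [← Finset.sum_sdiff hRuniv]
        have : ∑ j ∈ R, lam j ^ t * f j a = 0 :=
          Finset.sum_eq_zero fun j hj => by
            simp only [hf]; rw [hdownload j hj a hai, sub_self, mul_zero]
        rw [this, add_zero]
      -- second sum: only the i-th term survives
      have e2 : (∑ j, (if (a j : ℕ) = 0 then
            ∑ e ∈ univ.filter (fun e : Fin s => (e : ℕ) ≠ 0),
              mu e ^ t * f j (Function.update a j e) else 0))
          = ∑ e ∈ univ.filter (fun e : Fin s => (e : ℕ) ≠ 0),
              mu e ^ t * f i (Function.update a i e) := by
        rw [Finset.sum_eq_single i]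
        · rw [if_pos hai]
        · intro j _ hji
          split
          · exact Finset.sum_eq_zero fun e he => by
              rw [hcouple j hji (by assumption) e (by simpa using (mem_filter.1 he).2),
                mul_zero]
          · rfl
        · intro habs; exact absurd (mem_univ i) habs
      rw [e1, e2] at h0
      rw [hS, Finset.sum_disjSum]
      exact h0
    have hvz := vand_zero S α v hinj hsys
    constructor
    · intro j hjR
      exact hvz (Sum.inl j) (by rw [hS]; exact Finset.inl_mem_disjSum.2 (by simp [hjR]))
    · intro e he
      exact hvz (Sum.inr e) (by rw [hS]; exact Finset.inr_mem_disjSum.2 (by simp [he]))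
  have part1 : ∀ j : Fin n, ∀ a : Fin n → Fin s, (a i : ℕ) = 0 → c j b a = c' j b a := by
    intro j a hai
    by_cases hjR : j ∈ R
    · exact hdownload j hjR a hai
    · have := (key _ a hai rfl).1 j hjR
      simpa [hf, sub_eq_zero] using this
  refine ⟨part1, fun a => ?_⟩
  by_cases hai : (a i : ℕ) = 0
  · exact part1 i a hai
  · set a0 : Fin n → Fin s := Function.update a i ⟨0, hs0⟩ with ha0
    have ha0i : (a0 i : ℕ) = 0 := by simp [ha0]
    have hrec : Function.update a0 i (a i) = a := by
      rw [ha0, Function.update_idem, Function.update_eq_self]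
    have := (key _ a0 ha0i rfl).2 (a i) hai
    rw [hrec] at this
    simpa [hf, sub_eq_zero] using this
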